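/- Let G be a finite group, λ an irreducible complex representation of G with character χ_λ, and w ∈ G. Then (dim λ / |G|) · Σ_{s ∈ G} Σ_{t ∈ G} χ_λ(s t s⁻¹ t⁻¹ w⁻¹) = (|G| / dim λ) · χ_λ(w⁻¹). -/

import Mathlib

open CategoryTheory

noncomputable section CharCommutatorAux

private lemma schur_scalar' {G : Type} [Group G] (V : FDRep ℂ G) (hV : Simple V)
    (T : Module.End ℂ V) (hT : ∀ g : G, T * V.ρ g = V.ρ g * T) :
    ∃ c : ℂ, T = c • (1 : Module.End ℂ V) := by
  haveI := hV
  let f : V ⟶ V := ⟨FGModuleCat.ofHom T, fun g => by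
    ext v; exact LinearMap.congr_fun (hT g) v⟩
  obtain ⟨c, hc⟩ := endomorphism_simple_eq_smul_id (𝕜 := ℂ) f
  refine ⟨c, ?_⟩
  have h := congrArg Action.Hom.hom hc
  rw [Action.smul_hom, Action.id_hom] at h
  exact (congrArg (fun φ : V.V ⟶ V.V => φ.hom.hom) h).symm

private lemma keyA' {G : Type} [Group G] [Fintype G] (V : FDRep ℂ G) (hV : Simple V) (x y : G) :
    V.character 1 * ∑ t : G, V.character (t * x * t⁻¹ * y)
      = (Fintype.card G : ℂ) * V.character x * V.character y := by
  set T : Module.End ℂ V := ∑ t : G, V.ρ (t * x * t⁻¹) with hTdef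
  have hT : ∀ g : G, T * V.ρ g = V.ρ g * T := by
    intro g
    rw [hTdef, Finset.sum_mul, Finset.mul_sum]
    rw [← Equiv.sum_comp (Equiv.mulLeft g) (fun t => V.ρ (t * x * t⁻¹) * V.ρ g)]
    refine Finset.sum_congr rfl fun t _ => ?_
    simp only [Equiv.coe_mulLeft]
    rw [← map_mul, ← map_mul]
    congr 1
    group
  obtain ⟨c, hc⟩ := schur_scalar' V hV T hT
  have htr : LinearMap.trace ℂ V T = (Fintype.card G : ℂ) * V.character x := by
    rw [hTdef, map_sum]
    have h : ∀ t : G, LinearMap.trace ℂ V (V.ρ (t * x * t⁻¹)) = V.character x := fun t =>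
      V.char_conj x t
    simp only [h, Finset.sum_const, Finset.card_univ, nsmul_eq_mul]
  have h1 : LinearMap.trace ℂ V T = c * V.character 1 := by
    rw [hc, map_smul, smul_eq_mul, FDRep.char_one]
    congr 1
    simpa using LinearMap.trace_one (R := ℂ) (M := V)
  have hsum : ∑ t : G, V.character (t * x * t⁻¹ * y) = c * V.character y := by
    have h : ∀ t : G, V.character (t * x * t⁻¹ * y)
        = LinearMap.trace ℂ V (V.ρ (t * x * t⁻¹) * V.ρ y) := by
      intro t; rw [← map_mul]; rfl
    rw [Finset.sum_congr rfl fun t _ => h t, ← map_sum, ← Finset.sum_mul, ← hTdef, hc,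
      smul_mul_assoc, one_mul, map_smul, smul_eq_mul]
    rfl
  rw [hsum, ← htr, h1]
  ring

private lemma keyB' {G : Type} [Group G] [Fintype G] (V : FDRep ℂ G) (hV : Simple V) (y : G) :
    V.character 1 * ∑ t : G, V.character t * V.character (t⁻¹ * y)
      = (∑ t : G, V.character t * V.character t⁻¹) * V.character y := by
  set T : Module.End ℂ V := ∑ t : G, V.character t • V.ρ t⁻¹ with hTdef
  have hT : ∀ g : G, T * V.ρ g = V.ρ g * T := by
    intro g
    rw [hTdef, Finset.sum_mul, Finset.mul_sum]
    rw [← Equiv.sum_comp (MulAut.conj g).toEquiv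
      (fun t => (V.character t • V.ρ t⁻¹) * V.ρ g)]
    refine Finset.sum_congr rfl fun t _ => ?_
    simp only [MulEquiv.toEquiv_eq_coe, EquivLike.coe_coe, MulAut.conj_apply]
    rw [smul_mul_assoc, mul_smul_comm, ← map_mul, ← map_mul, V.char_conj]
    congr 2
    group
  obtain ⟨c, hc⟩ := schur_scalar' V hV T hT
  have htr : LinearMap.trace ℂ V T = ∑ t : G, V.character t * V.character t⁻¹ := by
    rw [hTdef, map_sum]
    refine Finset.sum_congr rfl fun t _ => ?_
    rw [map_smul, smul_eq_mul]
    rfl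
  have h1 : LinearMap.trace ℂ V T = c * V.character 1 := by
    rw [hc, map_smul, smul_eq_mul, FDRep.char_one]
    congr 1
    simpa using LinearMap.trace_one (R := ℂ) (M := V)
  have hsum : ∑ t : G, V.character t * V.character (t⁻¹ * y) = c * V.character y := by
    have h : ∀ t : G, V.character t * V.character (t⁻¹ * y)
        = LinearMap.trace ℂ V ((V.character t • V.ρ t⁻¹) * V.ρ y) := by
      intro t
      rw [smul_mul_assoc, map_smul, smul_eq_mul, ← map_mul]
      rfl
    rw [Finset.sum_congr rfl fun t _ => h t, ← map_sum, ← Finset.sum_mul, ← hTdef, hc,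
      smul_mul_assoc, one_mul, map_smul, smul_eq_mul]
    rfl
  rw [hsum, ← htr, h1]
  ring

private lemma keyC' {G : Type} [Group G] [Fintype G] (V : FDRep ℂ G) (hV : Simple V) :
    ∑ t : G, V.character t * V.character t⁻¹ = (Fintype.card G : ℂ) := by
  haveI := hV
  have hcard : (Fintype.card G : ℂ) ≠ 0 := Nat.cast_ne_zero.mpr Fintype.card_ne_zero
  haveI : Invertible (Nat.card G : ℂ) :=
    invertibleOfNonzero (show ((Nat.card G : ℕ) : ℂ) ≠ 0 by rw [Nat.card_eq_fintype_card]; exact hcard)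
  have h := FDRep.char_orthonormal (k := ℂ) (G := G) V V
  rw [if_pos ⟨Iso.refl V⟩, Nat.card_eq_fintype_card] at h
  have h1 : ((Fintype.card G : ℂ))⁻¹ * ∑ t : G, V.character t * V.character t⁻¹ = 1 := by
    exact_mod_cast h
  rw [inv_mul_eq_iff_eq_mul₀ hcard] at h1
  simpa using h1

end CharCommutatorAux

/-- For an irreducible complex representation `V` of a finite group `G` with character
`χ_V` (and `dim V = χ_V(1)`), and any `w ∈ G`,
`(dim V/|G|) · Σ_{s,t ∈ G} χ_V(s t s⁻¹ t⁻¹ w⁻¹) = (|G|/dim V) · χ_V(w⁻¹)`. -/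
theorem char_commutator_double_sum
    (G : Type) [Group G] [Fintype G]
    (V : FDRep ℂ G) (hV : Simple V) (w : G) :
    (V.character 1 / (Fintype.card G : ℂ))
        * ∑ s : G, ∑ t : G, V.character (s * t * s⁻¹ * t⁻¹ * w⁻¹)
      = ((Fintype.card G : ℂ) / V.character 1) * V.character w⁻¹ := by
  haveI := hV
  have hcard : (Fintype.card G : ℂ) ≠ 0 := Nat.cast_ne_zero.mpr Fintype.card_ne_zero
  have hnt : Nontrivial V := by
    by_contra h
    rw [not_nontrivial_iff_subsingleton] at h
    exact id_nonzero V (by ext v; exact h.elim _ _)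
  have hχ1 : V.character 1 ≠ 0 := by
    rw [FDRep.char_one]
    exact_mod_cast Nat.cast_ne_zero.mpr Module.finrank_pos.ne'
  have hS : V.character 1 * ∑ s : G, ∑ t : G, V.character (s * t * s⁻¹ * t⁻¹ * w⁻¹)
      = (Fintype.card G : ℂ) * ∑ t : G, V.character t * V.character (t⁻¹ * w⁻¹) := by
    rw [Finset.sum_comm, Finset.mul_sum, Finset.mul_sum]
    refine Finset.sum_congr rfl fun t _ => ?_
    have e1 : ∑ s : G, V.character (s * t * s⁻¹ * t⁻¹ * w⁻¹)
        = ∑ s : G, V.character (s * t * s⁻¹ * (t⁻¹ * w⁻¹)) :=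
      Finset.sum_congr rfl fun s _ => by rw [mul_assoc]
    rw [e1, keyA' V hV t (t⁻¹ * w⁻¹)]
    ring
  have hmain : V.character 1 * (V.character 1
        * ∑ s : G, ∑ t : G, V.character (s * t * s⁻¹ * t⁻¹ * w⁻¹))
      = (Fintype.card G : ℂ) * ((Fintype.card G : ℂ) * V.character w⁻¹) := by
    rw [hS, mul_left_comm, keyB' V hV w⁻¹, keyC' V hV]
  rw [div_mul_eq_mul_div, div_mul_eq_mul_div, div_eq_div_iff hcard hχ1]
  linear_combination hmain
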